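/- For every origin-symmetric convex body K in ℝⁿ and every vector z ∈ ℝⁿ, the Gaussian measure satisfies γₙ(K + z) ≥ e^{−|z|²/2} · γₙ(K). -/

import Mathlib

open MeasureTheory Pointwise Real

/-- The standard Gaussian probability measure on `ℝⁿ`, with density
`(2π)^{-n/2} e^{-|x|²/2}` with respect to Lebesgue measure. -/
noncomputable def gaussianMeasure (n : ℕ) : Measure (EuclideanSpace ℝ (Fin n)) :=
  volume.withDensity
    (fun x => ENNReal.ofReal ((2 * π) ^ (-(n : ℝ) / 2) * Real.exp (-‖x‖ ^ 2 / 2)))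

/-- For an origin-symmetric convex body `K` and any `z ∈ ℝⁿ`,
`γₙ(K + z) ≥ e^{−|z|²/2} γₙ(K)`. -/
theorem gaussian_translate {n : ℕ} (K : Set (EuclideanSpace ℝ (Fin n)))
    (hK : IsCompact K) (hKc : Convex ℝ K) (hKi : (interior K).Nonempty)
    (hsym : K = -K) (z : EuclideanSpace ℝ (Fin n)) :
    ENNReal.ofReal (Real.exp (-‖z‖ ^ 2 / 2)) * gaussianMeasure n K ≤
      gaussianMeasure n (z +ᵥ K) := by
  set c : ℝ := (2 * π) ^ (-(n : ℝ) / 2) with hc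
  have hc0 : 0 ≤ c := Real.rpow_nonneg (by positivity) _
  set D : EuclideanSpace ℝ (Fin n) → ENNReal :=
    fun x => ENNReal.ofReal (c * Real.exp (-‖x‖ ^ 2 / 2)) with hD
  have hDm : Measurable D := by
    apply ENNReal.measurable_ofReal.comp
    fun_prop
  have hKm : MeasurableSet K := hK.measurableSet
  have hKzm : MeasurableSet (z +ᵥ K) := (hK.vadd z).measurableSet
  have hγK : gaussianMeasure n K = ∫⁻ x in K, D x := by
    rw [gaussianMeasure, withDensity_apply _ hKm]
  have hpre : (z + ·) ⁻¹' (z +ᵥ K) = K := by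
    ext x; simp [Set.mem_vadd_set, vadd_eq_add]
  have hγKz : gaussianMeasure n (z +ᵥ K) = ∫⁻ x in K, D (z + x) := by
    rw [gaussianMeasure, withDensity_apply _ hKzm, ← hD,
      ← (measurePreserving_add_left (volume : Measure (EuclideanSpace ℝ (Fin n))) z)
        |>.setLIntegral_comp_preimage hKzm hDm, hpre]
  have hnegpre : (Neg.neg : EuclideanSpace ℝ (Fin n) → _) ⁻¹' K = K := by
    conv_lhs => rw [hsym]
    ext x; simp
  have hγKz' : gaussianMeasure n (z +ᵥ K) = ∫⁻ x in K, D (z - x) := by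
    have h := (Measure.measurePreserving_neg (volume : Measure (EuclideanSpace ℝ (Fin n))))
      |>.setLIntegral_comp_preimage hKm
        (f := fun x => D (z + x)) (hDm.comp (measurable_const.add measurable_id))
    rw [hnegpre] at h
    simp only [← sub_eq_add_neg] at h
    rw [hγKz, ← h]
  -- pointwise key inequality
  have key : ∀ x, 2 * ENNReal.ofReal (Real.exp (-‖z‖ ^ 2 / 2)) * D x
      ≤ D (z + x) + D (z - x) := by
    intro x
    set t : ℝ := inner ℝ z x with ht
    have e1 : Real.exp (-‖z + x‖ ^ 2 / 2)
        = Real.exp (-‖z‖ ^ 2 / 2) * Real.exp (-‖x‖ ^ 2 / 2) * Real.exp (-t) := by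
      rw [← Real.exp_add, ← Real.exp_add]; congr 1
      rw [norm_add_sq_real z x]; ring
    have e2 : Real.exp (-‖z - x‖ ^ 2 / 2)
        = Real.exp (-‖z‖ ^ 2 / 2) * Real.exp (-‖x‖ ^ 2 / 2) * Real.exp t := by
      rw [← Real.exp_add, ← Real.exp_add]; congr 1
      rw [norm_sub_sq_real z x]; ring
    have hcosh : 2 ≤ Real.exp t + Real.exp (-t) := by
      have := Real.one_le_cosh t
      rw [Real.cosh_eq] at this; linarith
    have hreal : 2 * (Real.exp (-‖z‖ ^ 2 / 2) * (c * Real.exp (-‖x‖ ^ 2 / 2)))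
        ≤ c * Real.exp (-‖z + x‖ ^ 2 / 2) + c * Real.exp (-‖z - x‖ ^ 2 / 2) := by
      rw [e1, e2]
      have hAB : 0 ≤ c * (Real.exp (-‖z‖ ^ 2 / 2) * Real.exp (-‖x‖ ^ 2 / 2)) := by
        positivity
      nlinarith [mul_le_mul_of_nonneg_left hcosh hAB]
    calc 2 * ENNReal.ofReal (Real.exp (-‖z‖ ^ 2 / 2)) * D x
        = ENNReal.ofReal (2 * (Real.exp (-‖z‖ ^ 2 / 2) * (c * Real.exp (-‖x‖ ^ 2 / 2)))) := by
          rw [hD, ENNReal.ofReal_mul (by norm_num), ENNReal.ofReal_mul (by positivity)]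
          norm_num [mul_assoc]
      _ ≤ ENNReal.ofReal (c * Real.exp (-‖z + x‖ ^ 2 / 2) + c * Real.exp (-‖z - x‖ ^ 2 / 2)) :=
          ENNReal.ofReal_le_ofReal hreal
      _ = D (z + x) + D (z - x) := ENNReal.ofReal_add (by positivity) (by positivity)
  -- put it together
  rw [← ENNReal.mul_le_mul_iff_right (a := 2) two_ne_zero ENNReal.ofNat_ne_top]
  calc 2 * (ENNReal.ofReal (Real.exp (-‖z‖ ^ 2 / 2)) * gaussianMeasure n K)
      = ∫⁻ x in K, 2 * ENNReal.ofReal (Real.exp (-‖z‖ ^ 2 / 2)) * D x := by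
        rw [hγK, lintegral_const_mul _ hDm, mul_assoc]
    _ ≤ ∫⁻ x in K, (D (z + x) + D (z - x)) := lintegral_mono fun x => key x
    _ = (∫⁻ x in K, D (z + x)) + ∫⁻ x in K, D (z - x) :=
        lintegral_add_left (hDm.comp (measurable_const.add measurable_id)) _
    _ = 2 * gaussianMeasure n (z +ᵥ K) := by rw [← hγKz, ← hγKz', two_mul]
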